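/- Let G act linearly on V and let κ : V ⊗ V → kG ⊕ (V ⊗ kG) be an alternating bilinear map. The extension of κ to a map on U ⊗_{kG} U, U = V ⊗ kG, defined by κ((v₁⊗g₁) ⊗_{kG} (v₂⊗g₂)) = κ(v₁, g₁·v₂)·g₁g₂, is a well-defined kG-bimodule homomorphism if and only if κ is G-invariant, i.e. g·κ(g⁻¹·u, g⁻¹·v) = κ(u,v) for all u,v ∈ V, g ∈ G (where G acts on kG-valued components by conjugation and on V-valued components by the linear action combined with conjugation). -/

import Mathlib

/-- A presentation of `A` as the skew group algebra `S#G`. -/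
structure SkewPresentation (k S G A : Type*) [CommSemiring k] [Ring S] [Algebra k S]
    [Group G] [Ring A] [Algebra k A] (act : G →* S ≃ₐ[k] S) where
  ιS : S →ₐ[k] A
  ιG : G →* Aˣ
  comm : ∀ (g : G) (s : S), (ιG g : A) * ιS s = ιS (act g s) * (ιG g : A)
  bij : Function.Bijective fun f : G →₀ S => f.sum fun g s => ιS s * (ιG g : A)

section Aux

open scoped TensorProduct

variable {k V A : Type*} [Field k] [AddCommGroup V] [Module k V] [Ring A] [Algebra k A]

/-- The bilinear map `κ` as a multilinear map on `Fin 2 → V`. -/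
noncomputable def stmt17mu (κ : V →ₗ[k] V →ₗ[k] A) :
    MultilinearMap k (fun _ : Fin 2 => V) A :=
  LinearMap.uncurryLeft
    ((MultilinearMap.ofSubsingletonₗ k k V A (0 : Fin 1)).toLinearMap.comp κ)

lemma stmt17mu_apply (κ : V →ₗ[k] V →ₗ[k] A) (m : Fin 2 → V) :
    stmt17mu κ m = κ (m 0) (m 1) := rfl

/-- Components of the degree-two projection followed by `κ`. -/
noncomputable def stmt17comp (κ : V →ₗ[k] V →ₗ[k] A) :
    ∀ n : ℕ, (⨂[k]^n V) →ₗ[k] A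
  | 0 => 0
  | 1 => 0
  | 2 => PiTensorProduct.lift (stmt17mu κ)
  | (_ + 3) => 0

/-- The linear map `K₀` on the tensor algebra: project onto degree two and apply `κ`. -/
noncomputable def stmt17K0 (κ : V →ₗ[k] V →ₗ[k] A) : TensorAlgebra k V →ₗ[k] A :=
  (DirectSum.toModule k ℕ A (stmt17comp κ)).comp
    (TensorAlgebra.toDirectSum (R := k) (M := V)).toLinearMap

lemma stmt17K0_tprod (κ : V →ₗ[k] V →ₗ[k] A) {n : ℕ} (m : Fin n → V) :
    stmt17K0 κ (TensorAlgebra.tprod k V n m) =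
      stmt17comp κ n (PiTensorProduct.tprod k m) := by
  rw [stmt17K0, LinearMap.comp_apply, AlgHom.toLinearMap_apply,
    TensorAlgebra.toDirectSum_tensorPower_tprod, ← DirectSum.lof_eq_of k,
    DirectSum.toModule_lof]

lemma stmt17K0_ii (κ : V →ₗ[k] V →ₗ[k] A) (u v : V) :
    stmt17K0 κ (TensorAlgebra.ι k u * TensorAlgebra.ι k v) = κ u v := by
  have h : TensorAlgebra.ι k u * TensorAlgebra.ι k v
      = TensorAlgebra.tprod k V 2 ![u, v] := by
    rw [TensorAlgebra.tprod_apply]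
    simp [List.ofFn_succ]
  rw [h, stmt17K0_tprod]
  show PiTensorProduct.lift (stmt17mu κ) (PiTensorProduct.tprod k ![u, v]) = κ u v
  rw [PiTensorProduct.lift.tprod, stmt17mu_apply]
  simp

/-- A linear map on the tensor algebra vanishing on all products of `ι`'s is zero. -/
lemma stmt17span {W : Type*} [AddCommGroup W] [Module k W]
    (D : TensorAlgebra k V →ₗ[k] W)
    (h : ∀ (n : ℕ) (m : Fin n → V), D (TensorAlgebra.tprod k V n m) = 0) :
    D = 0 := by
  apply LinearMap.ext
  intro x
  rw [LinearMap.zero_apply, ← TensorAlgebra.ofDirectSum_toDirectSum x]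
  generalize TensorAlgebra.toDirectSum x = y
  induction y using DirectSum.induction_on with
  | zero => simp
  | of n z =>
      induction z using PiTensorProduct.induction_on with
      | smul_tprod r m =>
          rw [← DirectSum.lof_eq_of k, map_smul, map_smul, map_smul,
            DirectSum.lof_eq_of, TensorAlgebra.ofDirectSum_of_tprod, h, smul_zero]
      | add z₁ z₂ hz₁ hz₂ =>
          rw [map_add, map_add, map_add, hz₁, hz₂, add_zero]
  | add y₁ y₂ hy₁ hy₂ =>
      rw [map_add, map_add, hy₁, hy₂, add_zero]

end Aux

/-- for an alternating bilinear `κ : V ⊗ V → kG ⊕ (V ⊗ kG)`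
(taking values in the filtered-degree-one part of `A = T_k(V)#G`), the
extension of `κ` to `U ⊗_{kG} U` (`U = V ⊗ kG`) given by
`κ((v₁⊗g₁) ⊗ (v₂⊗g₂)) = κ(v₁, g₁·v₂)·g₁g₂` is a well-defined `kG`-bimodule
homomorphism if and only if `κ` is `G`-invariant:
`g·κ(u,v)·g⁻¹ = κ(g·u, g·v)` for all `u, v ∈ V`, `g ∈ G`. -/
theorem stmt17 {k V G A : Type*} [Field k] [AddCommGroup V] [Module k V]
    [Module.Finite k V] [Group G] [Finite G] [Ring A] [Algebra k A]
    (act : G →* V ≃ₗ[k] V)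
    (actT : G →* TensorAlgebra k V ≃ₐ[k] TensorAlgebra k V)
    (hactT : ∀ (g : G) (v : V),
      actT g (TensorAlgebra.ι k v) = TensorAlgebra.ι k (act g v))
    (pres : SkewPresentation k (TensorAlgebra k V) G A actT)
    (κ : V →ₗ[k] V →ₗ[k] A)
    (hκalt : ∀ v : V, κ v v = 0)
    -- `κ` takes values in `kG ⊕ (V ⊗ kG)`, the filtered degree-one part of `A`
    (hκval : ∀ u v : V, κ u v ∈ Submodule.span k
      ({y | ∃ g : G, y = ((pres.ιG g : Aˣ) : A)} ∪
       {y | ∃ (w : V) (g : G),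
         y = pres.ιS (TensorAlgebra.ι k w) * ((pres.ιG g : Aˣ) : A)})) :
    -- the extension is a well-defined `kG`-bimodule homomorphism ↔ `κ` is `G`-invariant
    ((∃ K : A →ₗ[k] A,
        (∀ (v₁ v₂ : V) (g : G),
          K (pres.ιS (TensorAlgebra.ι k v₁ * TensorAlgebra.ι k v₂) *
              ((pres.ιG g : Aˣ) : A)) = κ v₁ v₂ * ((pres.ιG g : Aˣ) : A)) ∧
        (∀ (g : G) (x : A),
          K (((pres.ιG g : Aˣ) : A) * x) = ((pres.ιG g : Aˣ) : A) * K x) ∧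
        (∀ (g : G) (x : A),
          K (x * ((pres.ιG g : Aˣ) : A)) = K x * ((pres.ιG g : Aˣ) : A))) ↔
      (∀ (g : G) (u v : V),
        ((pres.ιG g : Aˣ) : A) * κ u v * (((pres.ιG g)⁻¹ : Aˣ) : A) =
          κ (act g u) (act g v))) := by
  classical
  constructor
  · rintro ⟨K, h1, h2, h3⟩ g u v
    have h10 : K (pres.ιS (TensorAlgebra.ι k u * TensorAlgebra.ι k v)) = κ u v := by
      have := h1 u v 1
      simpa using this
    have h11 : ((pres.ιG g : Aˣ) : A) *
        pres.ιS (TensorAlgebra.ι k u * TensorAlgebra.ι k v) =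
        pres.ιS (TensorAlgebra.ι k (act g u) * TensorAlgebra.ι k (act g v)) *
          ((pres.ιG g : Aˣ) : A) := by
      rw [pres.comm]
      congr 2
      rw [map_mul, hactT, hactT]
    have h12 : κ (act g u) (act g v) * ((pres.ιG g : Aˣ) : A) =
        ((pres.ιG g : Aˣ) : A) * κ u v := by
      calc κ (act g u) (act g v) * ((pres.ιG g : Aˣ) : A)
          = K (pres.ιS (TensorAlgebra.ι k (act g u) * TensorAlgebra.ι k (act g v)) *
              ((pres.ιG g : Aˣ) : A)) := (h1 _ _ g).symm
        _ = K (((pres.ιG g : Aˣ) : A) *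
              pres.ιS (TensorAlgebra.ι k u * TensorAlgebra.ι k v)) := by rw [h11]
        _ = ((pres.ιG g : Aˣ) : A) *
              K (pres.ιS (TensorAlgebra.ι k u * TensorAlgebra.ι k v)) := h2 g _
        _ = ((pres.ιG g : Aˣ) : A) * κ u v := by rw [h10]
    calc ((pres.ιG g : Aˣ) : A) * κ u v * (((pres.ιG g)⁻¹ : Aˣ) : A)
        = κ (act g u) (act g v) * ((pres.ιG g : Aˣ) : A) *
            (((pres.ιG g)⁻¹ : Aˣ) : A) := by rw [← h12]
      _ = κ (act g u) (act g v) := by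
          rw [mul_assoc, Units.mul_inv, mul_one]
  · intro hinv
    -- the linear isomorphism `G →₀ T(V) ≃ A`
    set E : (G →₀ TensorAlgebra k V) →ₗ[k] A :=
      Finsupp.lsum k fun g =>
        (LinearMap.mulRight k ((pres.ιG g : Aˣ) : A)).comp pres.ιS.toLinearMap with hE
    have hEs : ∀ (g : G) (s : TensorAlgebra k V),
        E (Finsupp.single g s) = pres.ιS s * ((pres.ιG g : Aˣ) : A) := by
      intro g s
      rw [hE, Finsupp.lsum_single]
      rfl
    have hEbij : Function.Bijective E := by
      have hfun : (E : (G →₀ TensorAlgebra k V) → A) =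
          fun f : G →₀ TensorAlgebra k V =>
            f.sum fun g s => pres.ιS s * ((pres.ιG g : Aˣ) : A) := by
        funext f
        rw [hE, Finsupp.lsum_apply]
        rfl
      rw [hfun]
      exact pres.bij
    set eL := LinearEquiv.ofBijective E hEbij with heL
    set K0 := stmt17K0 κ with hK0def
    -- equivariance of K0
    have hequiv : ∀ (g : G) (s : TensorAlgebra k V),
        K0 (actT g s) = ((pres.ιG g : Aˣ) : A) * K0 s * (((pres.ιG g)⁻¹ : Aˣ) : A) := by
      intro g
      have hD : (K0.comp (actT g).toLinearMap -
          (LinearMap.mulRight k (((pres.ιG g)⁻¹ : Aˣ) : A)).comp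
            ((LinearMap.mulLeft k ((pres.ιG g : Aˣ) : A)).comp K0)) = 0 := by
        apply stmt17span
        intro n m
        have hact : actT g (TensorAlgebra.tprod k V n m) =
            TensorAlgebra.tprod k V n (fun i => act g (m i)) := by
          rw [TensorAlgebra.tprod_apply, TensorAlgebra.tprod_apply, map_list_prod,
            List.map_ofFn]
          congr 1
          have hfun : (⇑(actT g) ∘ fun i => TensorAlgebra.ι k (m i)) =
              fun i => TensorAlgebra.ι k (act g (m i)) := by
            funext i
            exact hactT g (m i)
          rw [hfun]
        simp only [LinearMap.sub_apply, LinearMap.comp_apply, LinearMap.mulLeft_apply,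
          LinearMap.mulRight_apply, AlgEquiv.toLinearMap_apply]
        rw [hact, hK0def, stmt17K0_tprod, stmt17K0_tprod]
        match n with
        | 2 =>
            show PiTensorProduct.lift (stmt17mu κ) _ -
              _ * (PiTensorProduct.lift (stmt17mu κ) _) * _ = 0
            rw [PiTensorProduct.lift.tprod, PiTensorProduct.lift.tprod,
              stmt17mu_apply, stmt17mu_apply, ← hinv g (m 0) (m 1), sub_self]
        | 0 => show (0 : _ →ₗ[k] A) _ - _ * ((0 : _ →ₗ[k] A) _) * _ = 0; simp
        | 1 => show (0 : _ →ₗ[k] A) _ - _ * ((0 : _ →ₗ[k] A) _) * _ = 0; simp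
        | (r + 3) => show (0 : _ →ₗ[k] A) _ - _ * ((0 : _ →ₗ[k] A) _) * _ = 0; simp
      intro s
      have := LinearMap.ext_iff.mp hD s
      simp only [LinearMap.sub_apply, LinearMap.comp_apply, LinearMap.mulLeft_apply,
        LinearMap.mulRight_apply, AlgEquiv.toLinearMap_apply, LinearMap.zero_apply,
        sub_eq_zero] at this
      exact this
    set L : (G →₀ TensorAlgebra k V) →ₗ[k] A :=
      Finsupp.lsum k fun g =>
        (LinearMap.mulRight k ((pres.ιG g : Aˣ) : A)).comp K0 with hL
    set K : A →ₗ[k] A := L.comp (eL.symm : A ≃ₗ[k] (G →₀ TensorAlgebra k V)).toLinearMap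
      with hK
    have hKE : ∀ f, K (E f) = L f := by
      intro f
      rw [hK, LinearMap.comp_apply, LinearEquiv.coe_toLinearMap]
      congr 1
      have : E f = eL f := rfl
      rw [this, LinearEquiv.symm_apply_apply]
    have hK1E : ∀ (g : G) (s : TensorAlgebra k V),
        K (E (Finsupp.single g s)) = K0 s * ((pres.ιG g : Aˣ) : A) := by
      intro g s
      rw [hKE, hL, Finsupp.lsum_single]
      rfl
    have hK1 : ∀ (g : G) (s : TensorAlgebra k V),
        K (pres.ιS s * ((pres.ιG g : Aˣ) : A)) = K0 s * ((pres.ιG g : Aˣ) : A) := by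
      intro g s
      rw [← hEs, hK1E]
    refine ⟨K, ?_, ?_, ?_⟩
    · intro v₁ v₂ g
      rw [hK1, hK0def, stmt17K0_ii]
    · -- left kG-linearity
      intro g x
      obtain ⟨f, rfl⟩ := hEbij.2 x
      induction f using Finsupp.induction_linear with
      | zero => simp
      | add f₁ f₂ hf₁ hf₂ => rw [map_add, mul_add, map_add, hf₁, hf₂, map_add, mul_add]
      | single h s =>
          have step : ((pres.ιG g : Aˣ) : A) * E (Finsupp.single h s) =
              E (Finsupp.single (g * h) (actT g s)) := by
            rw [hEs, hEs, ← mul_assoc, pres.comm, map_mul, Units.val_mul, mul_assoc]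
          rw [step, hK1E, hK1E, hequiv, map_mul, Units.val_mul]
          simp [mul_assoc, Units.inv_mul_cancel_left]
    · -- right kG-linearity
      intro g x
      obtain ⟨f, rfl⟩ := hEbij.2 x
      induction f using Finsupp.induction_linear with
      | zero => simp
      | add f₁ f₂ hf₁ hf₂ => rw [map_add, add_mul, map_add, hf₁, hf₂, map_add, add_mul]
      | single h s =>
          have step : E (Finsupp.single h s) * ((pres.ιG g : Aˣ) : A) =
              E (Finsupp.single (h * g) s) := by
            rw [hEs, hEs, map_mul, Units.val_mul, mul_assoc]
          rw [step, hK1E, hK1E, map_mul, Units.val_mul, mul_assoc]
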